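/- Let G be a d-bounded degree graph with odd degrees, i a vertex, and r0 an integer such that ((d+1)/(d-1)) · 2d · ∑_{r > r0} ((d-1)/(d+1))^r n_r(G,i) < 1. If at some time T in synchronous majority dynamics all vertices j within distance r0+2 of i satisfy A^j_T = A^i_T, then A^i_t = A^i_T for all t > T. -/

import Mathlib

namespace Stmt9Aux

variable {V : Type*}

/-- Bootstrap-percolation infection sets: start from all vertices at distance at least `R`
from `i`, and repeatedly infect any vertex having at least `(deg+1)/2` infected neighbors. -/
def infC (G : SimpleGraph V) [∀ v : V, Fintype (G.neighborSet v)] (i : V) (R : ℕ) :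
    ℕ → Set V
  | 0 => {v | R ≤ G.dist i v}
  | (k+1) => infC G i R k ∪
      {v | ∃ S : Finset V, S ⊆ G.neighborFinset v ∧ (∀ s ∈ S, s ∈ infC G i R k) ∧
        G.degree v + 1 ≤ 2 * S.card}

lemma infC_zero (G : SimpleGraph V) [∀ v : V, Fintype (G.neighborSet v)] (i : V) (R : ℕ) :
    infC G i R 0 = {v | R ≤ G.dist i v} := rfl

lemma infC_succ (G : SimpleGraph V) [∀ v : V, Fintype (G.neighborSet v)] (i : V) (R k : ℕ) :
    infC G i R (k+1) = infC G i R k ∪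
      {v | ∃ S : Finset V, S ⊆ G.neighborFinset v ∧ (∀ s ∈ S, s ∈ infC G i R k) ∧
        G.degree v + 1 ≤ 2 * S.card} := rfl

/-- The backward-walk measure, defined by recursion on the number of allowed steps. -/
noncomputable def smAux [DecidableEq V] (i : V) (D' : Finset V) (inS : V → Finset V) :
    ℕ → V → ℝ
  | 0, _ => 0
  | (n+1), u =>
      if u ∈ D' then
        ((inS u).card : ℝ)⁻¹ *
          ((if u = i then 1 else 0) +
            ∑ w ∈ D'.filter (fun w => u ∈ inS w), smAux i D' inS n w)
      else 0

/-- The abstract counting lemma: if every vertex of `D'` (a finite "infected interior" set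
containing `i`) has an in-set of more than half of its neighbours, consisting of vertices of
strictly smaller stage lying in `D' ∪ Bd`, then `1 ≤ x^(R-1) * ∑_{j ∈ Bd} deg j`. -/
lemma abstract_key [DecidableEq V] (i : V) (D' Bd : Finset V) (inS nb : V → Finset V)
    (σ δ : V → ℕ) (x : ℝ) (R : ℕ)
    (hx0 : 0 < x) (hx1 : x ≤ 1)
    (hxr : ∀ u ∈ D', ((nb u).card : ℝ) - 1 ≤ x * ((nb u).card + 1))
    (hiD : i ∈ D') (hdi : δ i = 0)
    (hsi : ∀ u ∈ D', u ≠ i → σ u < σ i)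
    (hin_sub : ∀ u ∈ D', inS u ⊆ nb u)
    (hin_card : ∀ u ∈ D', (nb u).card + 1 ≤ 2 * (inS u).card)
    (hslt : ∀ u ∈ D', ∀ s ∈ inS u, σ s < σ u)
    (hmem : ∀ u ∈ D', ∀ s ∈ inS u, s ∈ D' ∨ s ∈ Bd)
    (hdisj : ∀ u ∈ D', u ∉ Bd)
    (hsym : ∀ u w, w ∈ D' → u ∈ inS w → w ∈ nb u)
    (hd1 : ∀ u w, w ∈ D' → u ∈ inS w → δ w ≤ δ u + 1 ∧ δ u ≤ δ w + 1)
    (hdD : ∀ u ∈ D', δ u + 1 ≤ R)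
    (hdBd : ∀ s ∈ Bd, δ s = R) :
    (1 : ℝ) ≤ x ^ (R - 1) * ∑ j ∈ Bd, ((nb j).card : ℝ) := by
  have hcpos : ∀ u ∈ D', 0 < (inS u).card := by
    intro u hu
    have := hin_card u hu
    omega
  have noi : ∀ w ∈ D', i ∉ inS w := by
    intro w hw h
    have h1 : σ i < σ w := hslt w hw i h
    rcases eq_or_ne w i with heq | hne
    · rw [heq] at h1
      exact lt_irrefl _ h1
    · exact absurd (h1.trans (hsi w hw hne)) (lt_irrefl _)
  have chi : D'.filter (fun w => i ∈ inS w) = ∅ :=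
    Finset.filter_eq_empty_iff.mpr (fun w hw => noi w hw)
  -- stabilization of smAux
  have stab : ∀ t : ℕ, ∀ u ∈ D', ∀ n m : ℕ, σ i ≤ σ u + t → σ i < σ u + n →
      σ i < σ u + m → smAux i D' inS n u = smAux i D' inS m u := by
    intro t
    induction t with
    | zero =>
      intro u hu n m h0 hn hm
      have hui : u = i := by
        by_contra h
        have := hsi u hu h
        omega
      subst hui
      obtain ⟨n', rfl⟩ : ∃ n', n = n' + 1 := ⟨n - 1, by omega⟩
      obtain ⟨m', rfl⟩ : ∃ m', m = m' + 1 := ⟨m - 1, by omega⟩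
      simp [smAux, hu, chi]
    | succ t ih =>
      intro u hu n m h0 hn hm
      rcases eq_or_ne u i with rfl | hui
      · obtain ⟨n', rfl⟩ : ∃ n', n = n' + 1 := ⟨n - 1, by omega⟩
        obtain ⟨m', rfl⟩ : ∃ m', m = m' + 1 := ⟨m - 1, by omega⟩
        simp [smAux, hu, chi]
      · have hsu : σ u < σ i := hsi u hu hui
        obtain ⟨n', rfl⟩ : ∃ n', n = n' + 1 := ⟨n - 1, by omega⟩
        obtain ⟨m', rfl⟩ : ∃ m', m = m' + 1 := ⟨m - 1, by omega⟩
        simp only [smAux, if_pos hu]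
        congr 2
        apply Finset.sum_congr rfl
        intro w hw
        rw [Finset.mem_filter] at hw
        have hsw : σ u < σ w := hslt w hw.1 u hw.2
        exact ih w hw.1 n' m' (by omega) (by omega) (by omega)
  have unfold0 : ∀ u ∈ D', smAux i D' inS (σ i + 1) u = ((inS u).card : ℝ)⁻¹ *
      ((if u = i then 1 else 0) +
        ∑ w ∈ D'.filter (fun w => u ∈ inS w), smAux i D' inS (σ i + 1) w) := by
    intro u hu
    conv_lhs => rw [show σ i + 1 = (σ i) + 1 from rfl]
    simp only [smAux, if_pos hu]
    congr 2
    apply Finset.sum_congr rfl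
    intro w hw
    rw [Finset.mem_filter] at hw
    have hsw : σ u < σ w := hslt w hw.1 u hw.2
    exact stab (σ i) w hw.1 (σ i) (σ i + 1) (by omega) (by omega) (by omega)
  set SM : V → ℝ := smAux i D' inS (σ i + 1) with hSM
  have SMi : SM i = ((inS i).card : ℝ)⁻¹ := by
    rw [unfold0 i hiD, if_pos rfl, chi]
    simp
  have hci : (1 : ℝ) ≤ ((inS i).card : ℝ) := by
    exact_mod_cast hcpos i hiD
  -- claim A : SM u ≤ x ^ (δ u)
  have claimA : ∀ k : ℕ, ∀ u ∈ D', σ i ≤ σ u + k → SM u ≤ x ^ (δ u) := by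
    intro k
    induction k with
    | zero =>
      intro u hu h0
      have hui : u = i := by
        by_contra h
        have := hsi u hu h
        omega
      subst hui
      rw [SMi, hdi, pow_zero]
      exact inv_le_one_of_one_le₀ hci
    | succ k ih =>
      intro u hu h0
      rcases eq_or_ne u i with rfl | hui
      · rw [SMi, hdi, pow_zero]
        exact inv_le_one_of_one_le₀ hci
      · have hsu : σ u < σ i := hsi u hu hui
        rw [unfold0 u hu, if_neg hui, zero_add]
        set ch := D'.filter (fun w => u ∈ inS w) with hch
        have hbound : ∀ w ∈ ch, SM w ≤ x ^ (δ u - 1) := by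
          intro w hw
          rw [hch, Finset.mem_filter] at hw
          have hsw : σ u < σ w := hslt w hw.1 u hw.2
          have h1 : SM w ≤ x ^ (δ w) := ih w hw.1 (by omega)
          have h2 : δ u - 1 ≤ δ w := by
            have := (hd1 u w hw.1 hw.2).2
            omega
          exact h1.trans (pow_le_pow_of_le_one hx0.le hx1 h2)
        have hsum : ∑ w ∈ ch, SM w ≤ (ch.card : ℝ) * x ^ (δ u - 1) := by
          calc ∑ w ∈ ch, SM w ≤ ∑ _w ∈ ch, x ^ (δ u - 1) := Finset.sum_le_sum hbound
            _ = (ch.card : ℝ) * x ^ (δ u - 1) := by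
                rw [Finset.sum_const, nsmul_eq_mul]
        have hchsub : ch ⊆ nb u \ inS u := by
          intro w hw
          rw [hch, Finset.mem_filter] at hw
          rw [Finset.mem_sdiff]
          refine ⟨hsym u w hw.1 hw.2, fun hcon => ?_⟩
          exact absurd ((hslt u hu w hcon).trans (hslt w hw.1 u hw.2)) (lt_irrefl _)
        have hchcard : ch.card + (inS u).card ≤ (nb u).card := by
          have h1 := Finset.card_le_card hchsub
          have h2 := Finset.card_sdiff_of_subset (hin_sub u hu)
          have h3 := Finset.card_le_card (hin_sub u hu)
          omega
        have hcu : (0 : ℝ) < ((inS u).card : ℝ) := by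
          exact_mod_cast hcpos u hu
        have key2 : (ch.card : ℝ) * x ^ (δ u - 1) ≤ ((inS u).card : ℝ) * x ^ (δ u) := by
          rcases Nat.eq_zero_or_pos (δ u) with h | h
          · rw [h]
            simp only [Nat.zero_sub, pow_zero, mul_one]
            have hle : ch.card ≤ (inS u).card := by
              have := hin_card u hu
              omega
            exact_mod_cast hle
          · obtain ⟨l, hl⟩ : ∃ l, δ u = l + 1 := ⟨δ u - 1, by omega⟩
            rw [hl]
            have hl1 : l + 1 - 1 = l := by omega
            rw [hl1]
            have hg : 2 * ch.card + 1 ≤ (nb u).card := by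
              have := hin_card u hu
              omega
            have hgR : (2 : ℝ) * (ch.card : ℝ) + 1 ≤ ((nb u).card : ℝ) := by
              exact_mod_cast hg
            have h2c : ((nb u).card : ℝ) + 1 ≤ 2 * ((inS u).card : ℝ) := by
              exact_mod_cast hin_card u hu
            have hmx : (ch.card : ℝ) ≤ x * ((inS u).card : ℝ) := by
              nlinarith [hxr u hu]
            have hxl : (0 : ℝ) ≤ x ^ l := by positivity
            calc (ch.card : ℝ) * x ^ l ≤ (x * ((inS u).card : ℝ)) * x ^ l :=
                  mul_le_mul_of_nonneg_right hmx hxl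
              _ = ((inS u).card : ℝ) * x ^ (l + 1) := by ring
        calc ((inS u).card : ℝ)⁻¹ * ∑ w ∈ ch, SM w
            ≤ ((inS u).card : ℝ)⁻¹ * ((ch.card : ℝ) * x ^ (δ u - 1)) :=
              mul_le_mul_of_nonneg_left hsum (by positivity)
          _ ≤ ((inS u).card : ℝ)⁻¹ * (((inS u).card : ℝ) * x ^ (δ u)) :=
              mul_le_mul_of_nonneg_left key2 (by positivity)
          _ = x ^ (δ u) := by
              field_simp
  -- conservation
  have cons : ∑ w ∈ D', (((inS w).filter (fun s => s ∈ Bd)).card : ℝ) * SM w = 1 := by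
    have key1 : ∀ u ∈ D', ((inS u).card : ℝ) * SM u =
        (if u = i then 1 else 0) + ∑ w ∈ D'.filter (fun w => u ∈ inS w), SM w := by
      intro u hu
      rw [unfold0 u hu, mul_inv_cancel_left₀]
      exact_mod_cast (hcpos u hu).ne'
    have hsum1 : ∑ u ∈ D', ((inS u).card : ℝ) * SM u =
        1 + ∑ u ∈ D', ∑ w ∈ D'.filter (fun w => u ∈ inS w), SM w := by
      rw [Finset.sum_congr rfl key1, Finset.sum_add_distrib,
        Finset.sum_ite_eq' D' i (fun _ => (1 : ℝ)), if_pos hiD]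
    have hswap : ∑ u ∈ D', ∑ w ∈ D'.filter (fun w => u ∈ inS w), SM w
        = ∑ w ∈ D', (((inS w).filter (fun s => s ∈ D')).card : ℝ) * SM w := by
      calc ∑ u ∈ D', ∑ w ∈ D'.filter (fun w => u ∈ inS w), SM w
          = ∑ u ∈ D', ∑ w ∈ D', if u ∈ inS w then SM w else 0 := by
            refine Finset.sum_congr rfl fun u _ => ?_
            rw [Finset.sum_filter]
        _ = ∑ w ∈ D', ∑ u ∈ D', if u ∈ inS w then SM w else 0 := Finset.sum_comm
        _ = ∑ w ∈ D', (((inS w).filter (fun s => s ∈ D')).card : ℝ) * SM w := by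
            refine Finset.sum_congr rfl fun w _ => ?_
            rw [← Finset.sum_filter, Finset.sum_const, nsmul_eq_mul]
            congr 2
            rw [Finset.filter_mem_eq_inter, Finset.filter_mem_eq_inter, Finset.inter_comm]
    have hsplit : ∀ w ∈ D', ((inS w).card : ℝ) =
        (((inS w).filter (fun s => s ∈ D')).card : ℝ) +
        (((inS w).filter (fun s => s ∈ Bd)).card : ℝ) := by
      intro w hw
      have h1 : (inS w).filter (fun s => ¬ s ∈ D') = (inS w).filter (fun s => s ∈ Bd) := by
        apply Finset.filter_congr
        intro s hs
        constructor
        · intro h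
          exact (hmem w hw s hs).resolve_left h
        · intro h hD
          exact hdisj s hD h
      have h2 := Finset.card_filter_add_card_filter_not
        (s := inS w) (p := fun s => s ∈ D')
      rw [h1] at h2
      exact_mod_cast h2.symm
    have hfull : ∑ w ∈ D', ((inS w).card : ℝ) * SM w
        = ∑ w ∈ D', (((inS w).filter (fun s => s ∈ D')).card : ℝ) * SM w
          + ∑ w ∈ D', (((inS w).filter (fun s => s ∈ Bd)).card : ℝ) * SM w := by
      rw [← Finset.sum_add_distrib]
      refine Finset.sum_congr rfl fun w hw => ?_
      rw [hsplit w hw, add_mul]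
    rw [hswap] at hsum1
    linarith [hsum1, hfull]
  -- final chain
  have hRpow : ∀ w ∈ D', (((inS w).filter (fun s => s ∈ Bd)).card : ℝ) * SM w ≤
      (((inS w).filter (fun s => s ∈ Bd)).card : ℝ) * x ^ (R - 1) := by
    intro w hw
    rcases Nat.eq_zero_or_pos ((inS w).filter (fun s => s ∈ Bd)).card with h | h
    · rw [h]
      simp
    · obtain ⟨s, hs⟩ := Finset.card_pos.mp h
      rw [Finset.mem_filter] at hs
      have hdw : δ w = R - 1 := by
        have h1 := hdD w hw
        have h2 := hdBd s hs.2
        have h3 := (hd1 s w hw hs.1).1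
        have h4 := (hd1 s w hw hs.1).2
        omega
      have hA := claimA (σ i) w hw (Nat.le_add_left _ _)
      rw [hdw] at hA
      exact mul_le_mul_of_nonneg_left hA (by positivity)
  have hchain1 : (1 : ℝ) ≤ x ^ (R - 1) *
      ∑ w ∈ D', (((inS w).filter (fun s => s ∈ Bd)).card : ℝ) := by
    calc (1 : ℝ) = ∑ w ∈ D', (((inS w).filter (fun s => s ∈ Bd)).card : ℝ) * SM w :=
          cons.symm
      _ ≤ ∑ w ∈ D', (((inS w).filter (fun s => s ∈ Bd)).card : ℝ) * x ^ (R - 1) :=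
          Finset.sum_le_sum hRpow
      _ = x ^ (R - 1) * ∑ w ∈ D', (((inS w).filter (fun s => s ∈ Bd)).card : ℝ) := by
          rw [← Finset.sum_mul, mul_comm]
  have hcount : ∑ w ∈ D', ((inS w).filter (fun s => s ∈ Bd)).card ≤
      ∑ j ∈ Bd, (nb j).card := by
    have hstep : ∀ w ∈ D', ((inS w).filter (fun s => s ∈ Bd)).card =
        ∑ j ∈ Bd, (if j ∈ inS w then 1 else 0) := by
      intro w _
      rw [← Finset.card_filter]
      congr 1
      rw [Finset.filter_mem_eq_inter, Finset.filter_mem_eq_inter, Finset.inter_comm]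
    calc ∑ w ∈ D', ((inS w).filter (fun s => s ∈ Bd)).card
        = ∑ w ∈ D', ∑ j ∈ Bd, (if j ∈ inS w then 1 else 0) :=
          Finset.sum_congr rfl hstep
      _ = ∑ j ∈ Bd, ∑ w ∈ D', (if j ∈ inS w then 1 else 0) := Finset.sum_comm
      _ ≤ ∑ j ∈ Bd, (nb j).card := by
          refine Finset.sum_le_sum fun j _ => ?_
          rw [← Finset.card_filter]
          apply Finset.card_le_card
          intro w hw
          rw [Finset.mem_filter] at hw
          exact hsym j w hw.1 hw.2
  have hcountR : ∑ w ∈ D', (((inS w).filter (fun s => s ∈ Bd)).card : ℝ) ≤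
      ∑ j ∈ Bd, ((nb j).card : ℝ) := by
    have := hcount
    push_cast
    exact_mod_cast this
  calc (1 : ℝ) ≤ x ^ (R - 1) * ∑ w ∈ D', (((inS w).filter (fun s => s ∈ Bd)).card : ℝ) :=
        hchain1
    _ ≤ x ^ (R - 1) * ∑ j ∈ Bd, ((nb j).card : ℝ) :=
        mul_le_mul_of_nonneg_left hcountR (by positivity)

end Stmt9Aux

/-- Bunkers. If `((d+1)/(d-1))·2d·∑_{r>r0} ((d-1)/(d+1))^r n_r(G,i) < 1` and at
some time `T` all vertices within distance `r0+2` of `i` agree with `i`, then `i` never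
changes its opinion after time `T` (synchronous majority dynamics, slow-growth graph with
odd degrees at most `d`). -/
theorem stmt_9 {V : Type*} (G : SimpleGraph V) [∀ v : V, Fintype (G.neighborSet v)]
    (hconn : G.Connected)
    (d : ℕ) (hd : 3 ≤ d)
    (hodd : ∀ v, Odd (G.degree v)) (hdeg : ∀ v, G.degree v ≤ d)
    (i : V)
    (hslow : Summable (fun r : ℕ =>
      (((d : ℝ) - 1) / ((d : ℝ) + 1)) ^ r * ({j | G.dist i j = r}.ncard : ℝ)))
    (r0 : ℕ)
    (hr0 : (((d : ℝ) + 1) / ((d : ℝ) - 1)) * (2 * d) *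
      (∑' r : ℕ, if r0 < r then
        (((d : ℝ) - 1) / ((d : ℝ) + 1)) ^ r * ({j | G.dist i j = r}.ncard : ℝ) else 0) < 1)
    (A : ℕ → V → ℤ) (hA0 : ∀ v, A 0 v = 1 ∨ A 0 v = -1)
    (hdyn : ∀ t v, A (t + 1) v =
      if 0 < ∑ j ∈ G.neighborFinset v, A t j then 1 else -1)
    (T : ℕ) (hT : ∀ j : V, G.dist i j ≤ r0 + 2 → A T j = A T i) :
    ∀ t : ℕ, T < t → A t i = A T i := by
  classical
  have hd3 : (3 : ℝ) ≤ (d : ℝ) := by exact_mod_cast hd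
  set x : ℝ := ((d : ℝ) - 1) / ((d : ℝ) + 1) with hxdef
  have hx0 : 0 < x := by
    rw [hxdef]
    exact div_pos (by linarith) (by linarith)
  have hx1 : x < 1 := by
    rw [hxdef, div_lt_one (by linarith)]
    linarith
  -- all opinions are ±1
  have hval : ∀ t v, A t v = 1 ∨ A t v = -1 := by
    intro t
    cases t with
    | zero => exact hA0
    | succ t =>
      intro v
      rw [hdyn t v]
      split_ifs
      · exact Or.inl rfl
      · exact Or.inr rfl
  -- balls are finite
  have hball : ∀ r : ℕ, {v : V | G.dist i v ≤ r}.Finite := by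
    intro r
    induction r with
    | zero =>
      apply Set.Finite.subset (Set.finite_singleton i)
      intro v hv
      simp only [Set.mem_setOf_eq, Nat.le_zero] at hv
      simp only [Set.mem_singleton_iff]
      exact (hconn.dist_eq_zero_iff.mp hv).symm
    | succ r ih =>
      have hsub : {v : V | G.dist i v ≤ r + 1} ⊆
          {v : V | G.dist i v ≤ r} ∪ ⋃ u ∈ {v : V | G.dist i v ≤ r}, (G.neighborSet u) := by
        intro v hv
        simp only [Set.mem_setOf_eq] at hv
        rcases le_or_gt (G.dist i v) r with h | h
        · exact Or.inl h
        · have hdv : G.dist i v = r + 1 := by omega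
          obtain ⟨p, hp⟩ := hconn.exists_walk_length_eq_dist i v
          rw [hdv] at hp
          have hq : p.reverse.length = r + 1 := by
            rw [SimpleGraph.Walk.length_reverse, hp]
          generalize hqq : p.reverse = q at hq
          cases q with
          | nil => simp at hq
          | @cons _ u _ h' q' =>
            simp only [SimpleGraph.Walk.length_cons] at hq
            have hu : G.dist i u ≤ r := by
              rw [SimpleGraph.dist_comm]
              have := SimpleGraph.dist_le q'
              omega
            right
            exact Set.mem_biUnion hu ((SimpleGraph.mem_neighborSet G u v).mpr h'.symm)
      exact (ih.union (ih.biUnion (fun u _ => (G.neighborSet u).toFinite))).subset hsub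
  -- distance changes by at most 1 along edges
  have hdista : ∀ u v : V, G.Adj u v → G.dist i v ≤ G.dist i u + 1 := by
    intro u v h
    have h1 : G.dist u v ≤ 1 := by
      have := SimpleGraph.dist_le (SimpleGraph.Walk.cons h SimpleGraph.Walk.nil)
      simpa using this
    have h2 := hconn.dist_triangle (u := i) (v := u) (w := v)
    omega
  -- the infected set
  set Inf : Set V := {v : V | ∃ k, v ∈ Stmt9Aux.infC G i (r0 + 3) k} with hInfdef
  have hmono : ∀ k l : ℕ, k ≤ l → Stmt9Aux.infC G i (r0 + 3) k ⊆ Stmt9Aux.infC G i (r0 + 3) l := by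
    intro k l hkl
    have hstep : ∀ m, Stmt9Aux.infC G i (r0 + 3) m ⊆ Stmt9Aux.infC G i (r0 + 3) (m + 1) := by
      intro m
      rw [Stmt9Aux.infC_succ]
      exact Set.subset_union_left
    exact monotone_nat_of_le_succ hstep hkl
  -- stage function
  set stg : V → ℕ := fun v => sInf {k | v ∈ Stmt9Aux.infC G i (r0 + 3) k} with hstg
  have hmemInf : ∀ v, v ∈ Inf → v ∈ Stmt9Aux.infC G i (r0 + 3) (stg v) := by
    intro v hv
    rw [hInfdef, Set.mem_setOf_eq] at hv
    exact Nat.sInf_mem hv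
  have hstgle : ∀ v k, v ∈ Stmt9Aux.infC G i (r0 + 3) k → stg v ≤ k := by
    intro v k h
    exact Nat.sInf_le h
  -- i is not infected
  have hiInf : i ∉ Inf := by
    intro hi
    have hstg1 : ∀ v, v ∈ Inf → G.dist i v ≤ r0 + 2 → 1 ≤ stg v := by
      intro v hv hd2
      by_contra h
      have h0 : stg v = 0 := by omega
      have hmem0 := hmemInf v hv
      rw [h0, Stmt9Aux.infC_zero] at hmem0
      have : r0 + 3 ≤ G.dist i v := hmem0
      omega
    have hprev : ∀ v, v ∈ Inf → G.dist i v ≤ r0 + 2 → ∃ S : Finset V,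
        S ⊆ G.neighborFinset v ∧
        (∀ s ∈ S, s ∈ Stmt9Aux.infC G i (r0 + 3) (stg v - 1)) ∧
        G.degree v + 1 ≤ 2 * S.card := by
      intro v hv hd2
      have h1 : 1 ≤ stg v := hstg1 v hv hd2
      obtain ⟨m, hm⟩ : ∃ m, stg v = m + 1 := ⟨stg v - 1, by omega⟩
      have hmem2 := hmemInf v hv
      rw [hm, Stmt9Aux.infC_succ] at hmem2
      rcases hmem2 with h | h
      · exact absurd (hstgle v m h) (by omega)
      · obtain ⟨S, hS1, hS2, hS3⟩ := h
        have hm' : stg v - 1 = m := by omega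
        rw [hm']
        exact ⟨S, hS1, hS2, hS3⟩
    choose! inS hinS1 hinS2 hinS3 using hprev
    -- finite sets D' and Bd
    have hDfin : {v : V | v ∈ Inf ∧ G.dist i v ≤ r0 + 2 ∧ (v = i ∨ stg v < stg i)}.Finite :=
      (hball (r0 + 2)).subset (fun v hv => hv.2.1)
    have hBdfin : {v : V | G.dist i v = r0 + 3}.Finite :=
      (hball (r0 + 3)).subset (fun v hv => le_of_eq hv)
    set D' : Finset V := hDfin.toFinset with hD'
    set Bd : Finset V := hBdfin.toFinset with hBd
    have hmemD' : ∀ v, v ∈ D' ↔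
        (v ∈ Inf ∧ G.dist i v ≤ r0 + 2 ∧ (v = i ∨ stg v < stg i)) := by
      intro v
      rw [hD', Set.Finite.mem_toFinset]
      rfl
    have hmemBd : ∀ v, v ∈ Bd ↔ G.dist i v = r0 + 3 := by
      intro v
      rw [hBd, Set.Finite.mem_toFinset]
      rfl
    -- stage of in-set elements is smaller
    have hslt : ∀ u, u ∈ D' → ∀ s ∈ inS u, stg s < stg u := by
      intro u hu s hs
      obtain ⟨huI, huD, _⟩ := (hmemD' u).mp hu
      have h1 := hinS2 u huI huD s hs
      have h2 := hstgle s _ h1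
      have h3 := hstg1 u huI huD
      omega
    -- elements of in-sets are infected
    have hsInf : ∀ u, u ∈ D' → ∀ s ∈ inS u, s ∈ Inf := by
      intro u hu s hs
      obtain ⟨huI, huD, _⟩ := (hmemD' u).mp hu
      rw [hInfdef, Set.mem_setOf_eq]
      exact ⟨stg u - 1, hinS2 u huI huD s hs⟩
    -- apply the abstract lemma
    have hconc := Stmt9Aux.abstract_key i D' Bd inS (fun u => G.neighborFinset u)
      stg (fun v => G.dist i v) x (r0 + 3) hx0 hx1.le
      (by
        intro u _
        have h1 : ((G.neighborFinset u).card : ℝ) ≤ (d : ℝ) := by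
          have := hdeg u
          rw [SimpleGraph.card_neighborFinset_eq_degree]
          exact_mod_cast this
        rw [hxdef, div_mul_eq_mul_div, le_div_iff₀ (by linarith)]
        nlinarith)
      ((hmemD' i).mpr ⟨hi, by simp [SimpleGraph.dist_self], Or.inl rfl⟩)
      (by simp [SimpleGraph.dist_self])
      (fun u hu hne => ((hmemD' u).mp hu).2.2.resolve_left hne)
      (by
        intro u hu
        obtain ⟨huI, huD, _⟩ := (hmemD' u).mp hu
        exact hinS1 u huI huD)
      (by
        intro u hu
        obtain ⟨huI, huD, _⟩ := (hmemD' u).mp hu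
        have := hinS3 u huI huD
        rw [SimpleGraph.card_neighborFinset_eq_degree]
        omega)
      hslt
      (by
        -- hmem : in-set elements are in D' or Bd
        intro u hu s hs
        obtain ⟨huI, huD, huS⟩ := (hmemD' u).mp hu
        have hsnb : s ∈ G.neighborFinset u := hinS1 u huI huD hs
        have hadj : G.Adj u s := (SimpleGraph.mem_neighborFinset G u s).mp hsnb
        have hds : G.dist i s ≤ r0 + 3 := by
          have := hdista u s hadj
          omega
        rcases le_or_gt (G.dist i s) (r0 + 2) with h | h
        · left
          rw [hmemD' s]
          refine ⟨hsInf u hu s hs, h, Or.inr ?_⟩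
          have h1 := hslt u hu s hs
          rcases huS with rfl | h2
          · exact h1
          · omega
        · right
          rw [hmemBd s]
          omega)
      (by
        intro u hu
        obtain ⟨_, huD, _⟩ := (hmemD' u).mp hu
        rw [hmemBd u]
        omega)
      (by
        intro u w hw hu
        obtain ⟨hwI, hwD, _⟩ := (hmemD' w).mp hw
        have hunb : u ∈ G.neighborFinset w := hinS1 w hwI hwD hu
        have hadj : G.Adj w u := (SimpleGraph.mem_neighborFinset G w u).mp hunb
        exact (SimpleGraph.mem_neighborFinset G u w).mpr hadj.symm)
      (by
        intro u w hw hu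
        obtain ⟨hwI, hwD, _⟩ := (hmemD' w).mp hw
        have hunb : u ∈ G.neighborFinset w := hinS1 w hwI hwD hu
        have hadj : G.Adj w u := (SimpleGraph.mem_neighborFinset G w u).mp hunb
        exact ⟨hdista u w hadj.symm, hdista w u hadj⟩)
      (by
        intro u hu
        obtain ⟨_, huD, _⟩ := (hmemD' u).mp hu
        show G.dist i u + 1 ≤ r0 + 3
        omega)
      (fun s hs => (hmemBd s).mp hs)
    -- now derive a numeric contradiction
    have hR1 : r0 + 3 - 1 = r0 + 2 := by omega
    rw [hR1] at hconc
    have hdegle : ∀ j : V, ((G.neighborFinset j).card : ℝ) ≤ (d : ℝ) := by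
      intro j
      have := hdeg j
      rw [SimpleGraph.card_neighborFinset_eq_degree]
      exact_mod_cast this
    have hsumBd : ∑ j ∈ Bd, ((G.neighborFinset j).card : ℝ) ≤ (Bd.card : ℝ) * (d : ℝ) := by
      calc ∑ j ∈ Bd, ((G.neighborFinset j).card : ℝ) ≤ ∑ _j ∈ Bd, (d : ℝ) :=
            Finset.sum_le_sum (fun j _ => hdegle j)
        _ = (Bd.card : ℝ) * (d : ℝ) := by
            rw [Finset.sum_const, nsmul_eq_mul]
    have hfinal : (1 : ℝ) ≤ x ^ (r0 + 2) * ((Bd.card : ℝ) * (d : ℝ)) := by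
      calc (1 : ℝ) ≤ x ^ (r0 + 2) * ∑ j ∈ Bd, ((G.neighborFinset j).card : ℝ) := hconc
        _ ≤ x ^ (r0 + 2) * ((Bd.card : ℝ) * (d : ℝ)) :=
            mul_le_mul_of_nonneg_left hsumBd (by positivity)
    -- extract one term of the tsum
    have hsum2 : Summable (fun r : ℕ => if r0 < r then
        x ^ r * (({j | G.dist i j = r} : Set V).ncard : ℝ) else 0) := by
      have heq : (fun r : ℕ => if r0 < r then
          x ^ r * (({j | G.dist i j = r} : Set V).ncard : ℝ) else 0)
          = fun r : ℕ => Set.indicator {r : ℕ | r0 < r}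
            (fun r => x ^ r * (({j | G.dist i j = r} : Set V).ncard : ℝ)) r := by
        funext r
        by_cases h : r0 < r
        · rw [Set.indicator_of_mem (show r ∈ {r : ℕ | r0 < r} from h), if_pos h]
        · rw [Set.indicator_of_notMem (show r ∉ {r : ℕ | r0 < r} from h), if_neg h]
      rw [heq]
      exact hslow.indicator _
    have hle := Summable.le_tsum hsum2 (r0 + 3) (by
      intro j _
      by_cases h : r0 < j
      · rw [if_pos h]
        positivity
      · rw [if_neg h])
    rw [if_pos (by omega : r0 < r0 + 3)] at hle
    have hcard_cast : (({j | G.dist i j = r0 + 3} : Set V).ncard : ℝ) = (Bd.card : ℝ) := by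
      rw [Set.ncard_eq_toFinset_card _ hBdfin, hBd]
    rw [hcard_cast] at hle
    have hApos : (0 : ℝ) < ((d : ℝ) + 1) / ((d : ℝ) - 1) * (2 * d) := by
      apply mul_pos (div_pos (by linarith) (by linarith)) (by linarith)
    have h2 : ((d : ℝ) + 1) / ((d : ℝ) - 1) * (2 * d) * (x ^ (r0 + 3) * (Bd.card : ℝ)) < 1 :=
      lt_of_le_of_lt (mul_le_mul_of_nonneg_left hle hApos.le) hr0
    have hxx : ((d : ℝ) + 1) / ((d : ℝ) - 1) * x = 1 := by
      rw [hxdef, div_mul_div_comm, mul_comm]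
      exact div_self (by nlinarith)
    have hps : x ^ (r0 + 3) = x ^ (r0 + 2) * x := by
      have h3 : r0 + 3 = (r0 + 2) + 1 := by omega
      rw [h3, pow_succ]
    have hid : ((d : ℝ) + 1) / ((d : ℝ) - 1) * (2 * d) * (x ^ (r0 + 3) * (Bd.card : ℝ))
        = (((d : ℝ) + 1) / ((d : ℝ) - 1) * x) * (2 * (x ^ (r0 + 2) * ((Bd.card : ℝ) * d))) := by
      rw [hps]
      ring
    rw [hid, hxx, one_mul] at h2
    linarith
  -- the bunker property: any non-infected vertex has a strict majority of
  -- non-infected neighbours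
  have hbunk : ∀ v, v ∉ Inf →
      2 * ((G.neighborFinset v).filter (fun s => s ∈ Inf)).card + 1 ≤ G.degree v := by
    intro v hv
    set P := (G.neighborFinset v).filter (fun s => s ∈ Inf) with hP
    have h1 : ¬ (G.degree v + 1 ≤ 2 * P.card) := by
      intro hcon
      apply hv
      rw [hInfdef, Set.mem_setOf_eq]
      refine ⟨P.sup stg + 1, ?_⟩
      rw [Stmt9Aux.infC_succ]
      right
      refine ⟨P, Finset.filter_subset _ _, ?_, hcon⟩
      intro s hs
      have hsI : s ∈ Inf := (Finset.mem_filter.mp hs).2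
      have h2 := hmemInf s hsI
      exact hmono (stg s) (P.sup stg) (Finset.le_sup (f := stg) hs) h2
    have h2 : 2 * P.card ≤ G.degree v := by omega
    obtain ⟨l, hl⟩ := hodd v
    omega
  -- the invariant: non-infected vertices keep the opinion of i forever
  have hinv : ∀ s : ℕ, ∀ v, v ∉ Inf → A (T + s) v = A T i := by
    intro s
    induction s with
    | zero =>
      intro v hv
      have hdv : G.dist i v ≤ r0 + 2 := by
        by_contra h
        apply hv
        rw [hInfdef, Set.mem_setOf_eq]
        exact ⟨0, by rw [Stmt9Aux.infC_zero]; exact (by omega : r0 + 3 ≤ G.dist i v)⟩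
      exact hT v hdv
    | succ s ih =>
      intro v hv
      have hTs : T + (s + 1) = (T + s) + 1 := by omega
      rw [hTs, hdyn (T + s) v]
      have hbv := hbunk v hv
      set P := (G.neighborFinset v).filter (fun s => s ∈ Inf) with hP
      set Q := (G.neighborFinset v).filter (fun s => ¬ s ∈ Inf) with hQ
      have hPQ : P.card + Q.card = G.degree v := by
        rw [hP, hQ, ← SimpleGraph.card_neighborFinset_eq_degree]
        exact Finset.card_filter_add_card_filter_not (fun s => s ∈ Inf)
      have hcards : P.card + 1 ≤ Q.card := by
        omega
      have hsplitsum : ∑ j ∈ G.neighborFinset v, A (T + s) j =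
          (∑ j ∈ P, A (T + s) j) + (∑ j ∈ Q, A (T + s) j) := by
        rw [hP, hQ]
        exact (Finset.sum_filter_add_sum_filter_not _ _ _).symm
      have hQsum : ∑ j ∈ Q, A (T + s) j = (Q.card : ℤ) * A T i := by
        rw [Finset.sum_congr rfl (fun j hj => ih j (Finset.mem_filter.mp hj).2),
          Finset.sum_const, nsmul_eq_mul]
      have hPlow : -(P.card : ℤ) ≤ ∑ j ∈ P, A (T + s) j := by
        calc -(P.card : ℤ) = ∑ _j ∈ P, (-1 : ℤ) := by
              rw [Finset.sum_const, nsmul_eq_mul]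
              ring
          _ ≤ ∑ j ∈ P, A (T + s) j := by
              refine Finset.sum_le_sum fun j _ => ?_
              rcases hval (T + s) j with h | h <;> omega
      have hPhigh : ∑ j ∈ P, A (T + s) j ≤ (P.card : ℤ) := by
        calc ∑ j ∈ P, A (T + s) j ≤ ∑ _j ∈ P, (1 : ℤ) := by
              refine Finset.sum_le_sum fun j _ => ?_
              rcases hval (T + s) j with h | h <;> omega
          _ = (P.card : ℤ) := by
              rw [Finset.sum_const, nsmul_eq_mul]
              ring
      have hcardZ : (P.card : ℤ) + 1 ≤ (Q.card : ℤ) := by exact_mod_cast hcards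
      rcases hval T i with hc | hc
      · rw [if_pos, hc]
        rw [hsplitsum, hQsum, hc]
        have : (Q.card : ℤ) * 1 = (Q.card : ℤ) := by ring
        rw [this]
        linarith
      · rw [if_neg, hc]
        rw [hsplitsum, hQsum, hc]
        have : (Q.card : ℤ) * (-1) = -(Q.card : ℤ) := by ring
        rw [this]
        push_neg
        linarith
  intro t ht
  obtain ⟨s, rfl⟩ : ∃ s, t = T + s := ⟨t - T, by omega⟩
  exact hinv s i hiInf
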